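/- Let Λ be a nontrivial commutative ring and M a Λ-module. Suppose M admits two finite free resolutions, i.e. there are exact sequences 0 → Λ^{n_d} → Λ^{n_{d-1}} → ⋯ → Λ^{n_0} → M → 0 and 0 → Λ^{m_e} → Λ^{m_{e-1}} → ⋯ → Λ^{m_0} → M → 0 of Λ-modules with all Λ^{n_i}, Λ^{m_j} finite free. Then the two Euler characteristics agree: Σ_{i=0}^{d} (−1)^i n_i = Σ_{j=0}^{e} (−1)^j m_j (as integers). -/

import Mathlib

/-- A finite free resolution `0 → Λ^{n d} → ⋯ → Λ^{n 0} → M → 0` of length `d`: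
the ranks are given by `n : ℕ → ℕ` which vanishes above `d`, the maps
`f i : Λ^{n (i+1)} → Λ^{n i}` together with the augmentation `g : Λ^{n 0} → M`
form an exact sequence (exactness at every `Λ^{n i}` and surjectivity onto `M`;
since `n i = 0` for `i > d`, exactness at `Λ^{n d}` says the last map is injective). -/
structure FiniteFreeResolution (Λ : Type*) [CommRing Λ]
    (M : Type*) [AddCommGroup M] [Module Λ M] (d : ℕ) (n : ℕ → ℕ) : Type _ where
  bounded : ∀ i, d < i → n i = 0
  f : ∀ i : ℕ, (Fin (n (i + 1)) → Λ) →ₗ[Λ] (Fin (n i) → Λ)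
  g : (Fin (n 0) → Λ) →ₗ[Λ] M
  surj : Function.Surjective g
  exact_zero : LinearMap.range (f 0) = LinearMap.ker g
  exact : ∀ i : ℕ, LinearMap.range (f (i + 1)) = LinearMap.ker (f i)

open LinearMap Function Finset

universe u

variable (Λ : Type u) [CommRing Λ]

/-- Recursive definition of "M has a finite free resolution of length d with ranks n". -/
def HasRes : (d : ℕ) → (n : ℕ → ℕ) → (M : Type u) → [AddCommGroup M] → [Module Λ M] → Prop
  | 0, n, M, _, _ => ∃ g : (Fin (n 0) → Λ) →ₗ[Λ] M, Function.Bijective g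
  | (d+1), n, M, _, _ => ∃ g : (Fin (n 0) → Λ) →ₗ[Λ] M, Function.Surjective g ∧
      HasRes d (fun i => n (i+1)) (LinearMap.ker g)

variable {Λ}

lemma hasRes_congr : ∀ (d : ℕ) (n : ℕ → ℕ) (M N : Type u) [AddCommGroup M] [Module Λ M]
    [AddCommGroup N] [Module Λ N] (e : M ≃ₗ[Λ] N), HasRes Λ d n M → HasRes Λ d n N
  | 0, n, M, N, _, _, _, _, e, ⟨g, hg⟩ =>
      ⟨e.toLinearMap ∘ₗ g, e.bijective.comp hg⟩
  | (d+1), n, M, N, _, _, _, _, e, ⟨g, hg, hker⟩ => by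
      refine ⟨e.toLinearMap ∘ₗ g, e.surjective.comp hg, ?_⟩
      have h : LinearMap.ker (e.toLinearMap ∘ₗ g) = LinearMap.ker g := by
        rw [LinearMap.ker_comp, LinearMap.ker_eq_bot.mpr e.injective, Submodule.comap_bot]
      exact h ▸ hker

/-- Tacking a finite free module onto a module adds its rank to the 0-th rank of a resolution. -/
lemma hasRes_prod : ∀ (d : ℕ) (n n' : ℕ → ℕ) (b : ℕ) (h0 : n' 0 = n 0 + b)
    (hs : ∀ i, n' (i+1) = n (i+1)) (K : Type u) [AddCommGroup K] [Module Λ K],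
    HasRes Λ d n K → HasRes Λ d n' (K × (Fin b → Λ))
  | d, n, n', b, h0, hs, K, _, _, hK => by
    have ρ : (Fin (n' 0) → Λ) ≃ₗ[Λ] (Fin (n 0) → Λ) × (Fin b → Λ) :=
      (LinearEquiv.funCongrLeft Λ Λ ((finSumFinEquiv).trans (finCongr h0.symm))).trans
        (LinearEquiv.sumArrowLequivProdArrow _ _ Λ Λ)
    cases d with
    | zero =>
      obtain ⟨g, hg⟩ := hK
      exact ⟨(((LinearEquiv.ofBijective g hg).prodCongr
        (LinearEquiv.refl Λ (Fin b → Λ)))).toLinearMap ∘ₗ ρ.toLinearMap,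
        (((LinearEquiv.ofBijective g hg).prodCongr (LinearEquiv.refl Λ (Fin b → Λ))).bijective).comp
          ρ.bijective⟩
    | succ d =>
      obtain ⟨g, hg, hker⟩ := hK
      refine ⟨(g.prodMap (LinearMap.id : (Fin b → Λ) →ₗ[Λ] (Fin b → Λ))) ∘ₗ ρ.toLinearMap,
        ?_, ?_⟩
      · rintro ⟨k, v⟩
        obtain ⟨x, rfl⟩ := hg k
        exact ⟨ρ.symm (x, v), by simp⟩
      · set G := (g.prodMap (LinearMap.id : (Fin b → Λ) →ₗ[Λ] (Fin b → Λ))) ∘ₗ ρ.toLinearMap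
          with hG
        have hmem : ∀ z : Fin (n' 0) → Λ, z ∈ LinearMap.ker G ↔
            g (ρ z).1 = 0 ∧ (ρ z).2 = 0 := by
          intro z
          simp [hG, LinearMap.mem_ker, Prod.ext_iff]
        have eker : ↥(LinearMap.ker g) ≃ₗ[Λ] ↥(LinearMap.ker G) :=
          LinearEquiv.ofLinear
            (LinearMap.codRestrict _ (ρ.symm.toLinearMap ∘ₗ
              (LinearMap.inl Λ (Fin (n 0) → Λ) (Fin b → Λ)) ∘ₗ (LinearMap.ker g).subtype)
              (fun x => by rw [hmem]; simpa using x.2))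
            (LinearMap.codRestrict _ ((LinearMap.fst Λ (Fin (n 0) → Λ) (Fin b → Λ)) ∘ₗ
              ρ.toLinearMap ∘ₗ (LinearMap.ker G).subtype)
              (fun z => by simpa using ((hmem z.1).mp z.2).1))
            (LinearMap.ext fun z => Subtype.ext (by
              have h2 := ((hmem z.1).mp z.2).2
              simp only [LinearMap.comp_apply, LinearMap.codRestrict_apply,
                Submodule.coe_subtype, LinearMap.inl_apply, LinearMap.fst_apply,
                LinearMap.coe_comp, LinearEquiv.coe_coe, LinearMap.id_coe, id_eq,
                Function.comp_apply]
              rw [← h2]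
              exact ρ.symm_apply_apply z.1))
            (LinearMap.ext fun x => Subtype.ext (by
              simp only [LinearMap.comp_apply, LinearMap.codRestrict_apply,
                Submodule.coe_subtype, LinearMap.inl_apply, LinearMap.fst_apply,
                LinearMap.coe_comp, LinearEquiv.coe_coe, LinearMap.id_coe, id_eq,
                Function.comp_apply]
              rw [ρ.apply_symm_apply]))
        have hfun : (fun i => n' (i+1)) = (fun i => n (i+1)) := funext hs
        exact hasRes_congr d _ _ _ eker (hfun ▸ hker)

/-- A surjection onto a projective module splits the domain as kernel × target. -/
lemma split_surj {N P : Type u} [AddCommGroup N] [Module Λ N] [AddCommGroup P] [Module Λ P]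
    [Module.Projective Λ P] (g : N →ₗ[Λ] P) (hg : Function.Surjective g) :
    Nonempty (N ≃ₗ[Λ] ↥(LinearMap.ker g) × P) := by
  obtain ⟨s, hs⟩ := Module.projective_lifting_property g LinearMap.id hg
  exact ⟨((g.exact_subtype_ker_map).splitSurjectiveEquiv
    (Submodule.injective_subtype _) ⟨s, hs⟩).1⟩

/-- Schanuel's lemma for finite free modules. -/
lemma schanuel {M : Type u} [AddCommGroup M] [Module Λ M] {a b : ℕ}
    (g : (Fin a → Λ) →ₗ[Λ] M) (hg : Function.Surjective g)
    (g' : (Fin b → Λ) →ₗ[Λ] M) (hg' : Function.Surjective g') :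
    Nonempty ((↥(LinearMap.ker g) × (Fin b → Λ)) ≃ₗ[Λ] (↥(LinearMap.ker g') × (Fin a → Λ))) := by
  set F := Fin a → Λ with hF
  set G := Fin b → Λ with hG
  set φ : F × G →ₗ[Λ] M := g ∘ₗ LinearMap.fst Λ F G - g' ∘ₗ LinearMap.snd Λ F G with hφ
  have hφ' : ∀ z : F × G, φ z = g z.1 - g' z.2 := fun z => rfl
  have hmemX : ∀ z : F × G, z ∈ LinearMap.ker φ ↔ g z.1 - g' z.2 = 0 := by
    intro z; rw [LinearMap.mem_ker, hφ']
  set p : ↥(LinearMap.ker φ) →ₗ[Λ] F :=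
    (LinearMap.fst Λ F G) ∘ₗ (LinearMap.ker φ).subtype with hp
  set q : ↥(LinearMap.ker φ) →ₗ[Λ] G :=
    (LinearMap.snd Λ F G) ∘ₗ (LinearMap.ker φ).subtype with hq
  have hpz : ∀ z : ↥(LinearMap.ker φ), p z = (z : F × G).1 := fun z => rfl
  have hqz : ∀ z : ↥(LinearMap.ker φ), q z = (z : F × G).2 := fun z => rfl
  have hpsurj : Function.Surjective p := by
    intro x
    obtain ⟨y, hy⟩ := hg' (g x)
    exact ⟨⟨(x, y), (hmemX (x, y)).mpr (by rw [hy, sub_self])⟩, rfl⟩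
  have hqsurj : Function.Surjective q := by
    intro y
    obtain ⟨x, hx⟩ := hg (g' y)
    exact ⟨⟨(x, y), (hmemX (x, y)).mpr (by rw [hx, sub_self])⟩, rfl⟩
  -- ker p ≃ ker g'
  have ep : ↥(LinearMap.ker p) ≃ₗ[Λ] ↥(LinearMap.ker g') := by
    refine LinearEquiv.ofLinear
      (LinearMap.codRestrict _
        ((LinearMap.snd Λ F G) ∘ₗ (LinearMap.ker φ).subtype ∘ₗ (LinearMap.ker p).subtype)
        (fun z => ?_))
      (LinearMap.codRestrict _
        (LinearMap.codRestrict (LinearMap.ker φ)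
          ((LinearMap.inr Λ F G) ∘ₗ (LinearMap.ker g').subtype)
          (fun y => (hmemX (0, y.1)).mpr (by
            have : g' y.1 = 0 := y.2
            rw [map_zero, this, sub_zero])))
        (fun y => ?_)) ?_ ?_
    · have hz1 : ((z : ↥(LinearMap.ker φ)) : F × G).1 = 0 := z.2
      have hz2 := (hmemX _).mp (z : ↥(LinearMap.ker φ)).2
      show g' ((z : ↥(LinearMap.ker φ)) : F × G).2 = 0
      rw [hz1, map_zero, zero_sub, neg_eq_zero] at hz2
      exact hz2
    · show (⟨(0, y.1), _⟩ : ↥(LinearMap.ker φ)) ∈ LinearMap.ker p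
      rw [LinearMap.mem_ker, hpz]
    · exact LinearMap.ext fun y => Subtype.ext rfl
    · refine LinearMap.ext fun z => Subtype.ext (Subtype.ext ?_)
      have hz1 : ((z : ↥(LinearMap.ker φ)) : F × G).1 = 0 := z.2
      exact Prod.ext hz1.symm rfl
  -- ker q ≃ ker g
  have eq' : ↥(LinearMap.ker q) ≃ₗ[Λ] ↥(LinearMap.ker g) := by
    refine LinearEquiv.ofLinear
      (LinearMap.codRestrict _
        ((LinearMap.fst Λ F G) ∘ₗ (LinearMap.ker φ).subtype ∘ₗ (LinearMap.ker q).subtype)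
        (fun z => ?_))
      (LinearMap.codRestrict _
        (LinearMap.codRestrict (LinearMap.ker φ)
          ((LinearMap.inl Λ F G) ∘ₗ (LinearMap.ker g).subtype)
          (fun x => (hmemX (x.1, 0)).mpr (by
            have : g x.1 = 0 := x.2
            rw [map_zero, this, zero_sub, neg_eq_zero])))
        (fun x => ?_)) ?_ ?_
    · have hz1 : ((z : ↥(LinearMap.ker φ)) : F × G).2 = 0 := z.2
      have hz2 := (hmemX _).mp (z : ↥(LinearMap.ker φ)).2
      show g ((z : ↥(LinearMap.ker φ)) : F × G).1 = 0
      rw [hz1, map_zero, sub_zero] at hz2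
      exact hz2
    · show (⟨(x.1, 0), _⟩ : ↥(LinearMap.ker φ)) ∈ LinearMap.ker q
      rw [LinearMap.mem_ker, hqz]
    · exact LinearMap.ext fun x => Subtype.ext rfl
    · refine LinearMap.ext fun z => Subtype.ext (Subtype.ext ?_)
      have hz1 : ((z : ↥(LinearMap.ker φ)) : F × G).2 = 0 := z.2
      exact Prod.ext rfl hz1.symm
  obtain ⟨e1⟩ := split_surj p hpsurj
  obtain ⟨e2⟩ := split_surj q hqsurj
  exact ⟨((eq'.symm.prodCongr (LinearEquiv.refl Λ G)).trans e2.symm).trans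
    (e1.trans (ep.prodCongr (LinearEquiv.refl Λ F)))⟩

lemma sum_aux (d : ℕ) (n r : ℕ → ℕ) (a : ℕ) (h0 : (r 0 : ℤ) = (n 1 : ℤ) + a)
    (hs : ∀ i, r (i+1) = n (i+2)) :
    ∑ i ∈ Finset.range (d+1), (-1:ℤ)^i * (r i : ℤ) =
      (a : ℤ) + (n 0 : ℤ) - ∑ i ∈ Finset.range (d+2), (-1:ℤ)^i * (n i : ℤ) := by
  have h1 : ∑ i ∈ Finset.range (d+2), (-1:ℤ)^i * (n i : ℤ)
      = (∑ i ∈ Finset.range (d+1), (-1:ℤ)^(i+1) * (n (i+1) : ℤ)) + n 0 := by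
    rw [Finset.sum_range_succ' (fun i => (-1:ℤ)^i * (n i : ℤ)) (d+1)]
    simp
  have h2 : ∑ i ∈ Finset.range (d+1), (-1:ℤ)^i * (r i : ℤ)
      = (∑ i ∈ Finset.range d, (-1:ℤ)^(i+1) * (r (i+1) : ℤ)) + r 0 := by
    rw [Finset.sum_range_succ' (fun i => (-1:ℤ)^i * (r i : ℤ)) d]
    simp
  have h3 : ∑ i ∈ Finset.range (d+1), (-1:ℤ)^(i+1) * (n (i+1) : ℤ)
      = (∑ i ∈ Finset.range d, (-1:ℤ)^(i+2) * (n (i+2) : ℤ)) + (-1:ℤ)^1 * (n 1 : ℤ) := by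
    rw [Finset.sum_range_succ' (fun i => (-1:ℤ)^(i+1) * (n (i+1) : ℤ)) d]
  have h4 : ∑ i ∈ Finset.range d, (-1:ℤ)^(i+1) * (r (i+1) : ℤ)
      = - ∑ i ∈ Finset.range d, (-1:ℤ)^(i+2) * (n (i+2) : ℤ) := by
    rw [← Finset.sum_neg_distrib]
    refine Finset.sum_congr rfl fun i _ => ?_
    rw [hs i]
    ring
  rw [h2, h4, h1, h3, h0]
  ring

lemma base [Nontrivial Λ] : ∀ (e : ℕ) (n m : ℕ → ℕ) (M : Type u)
    [AddCommGroup M] [Module Λ M],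
    HasRes Λ 0 n M → HasRes Λ e m M →
    (n 0 : ℤ) = ∑ j ∈ Finset.range (e+1), (-1:ℤ)^j * (m j : ℤ)
  | 0, n, m, M, _, _, ⟨g, hg⟩, ⟨g', hg'⟩ => by
    have equiv : (Fin (n 0) → Λ) ≃ₗ[Λ] (Fin (m 0) → Λ) :=
      (LinearEquiv.ofBijective g hg).trans (LinearEquiv.ofBijective g' hg').symm
    have : n 0 = m 0 := eq_of_fin_equiv Λ equiv
    simp [this]
  | (e+1), n, m, M, _, _, ⟨g, hg⟩, ⟨g', hg', hker⟩ => by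
    have eM : (Fin (n 0) → Λ) ≃ₗ[Λ] M := LinearEquiv.ofBijective g hg
    have : Module.Projective Λ M := Module.Projective.of_equiv eM
    obtain ⟨σ⟩ := split_surj g' hg'
    have τ : (↥(LinearMap.ker g') × (Fin (n 0) → Λ)) ≃ₗ[Λ] (Fin (m 0) → Λ) :=
      ((LinearEquiv.refl Λ ↥(LinearMap.ker g')).prodCongr eM).trans σ.symm
    set r : ℕ → ℕ := fun i => Nat.rec (m 1 + n 0) (fun j _ => m (j+2)) i with hr
    have hres : HasRes Λ e r (Fin (m 0) → Λ) :=
      hasRes_congr e r _ _ τ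
        (hasRes_prod e (fun i => m (i+1)) r (n 0) rfl (fun i => rfl) _ hker)
    have h0 : HasRes Λ 0 (fun _ => m 0) (Fin (m 0) → Λ) := ⟨LinearMap.id, Function.bijective_id⟩
    have IH := base e (fun _ => m 0) r (Fin (m 0) → Λ) h0 hres
    have hsum := sum_aux e m r (n 0)
      (by show ((m 1 + n 0 : ℕ) : ℤ) = (m 1 : ℤ) + (n 0 : ℤ); push_cast; ring) (fun i => rfl)
    rw [hsum] at IH
    linarith

lemma main [Nontrivial Λ] : ∀ (d e : ℕ) (n m : ℕ → ℕ) (M : Type u)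
    [AddCommGroup M] [Module Λ M],
    HasRes Λ d n M → HasRes Λ e m M →
    ∑ i ∈ Finset.range (d+1), (-1:ℤ)^i * (n i : ℤ) =
      ∑ j ∈ Finset.range (e+1), (-1:ℤ)^j * (m j : ℤ)
  | 0, e, n, m, M, _, _, h1, h2 => by
    have := base e n m M h1 h2
    simp only [zero_add, Finset.range_one, Finset.sum_singleton, pow_zero, one_mul]
    exact this
  | (d+1), 0, n, m, M, _, _, h1, h2 => by
    have := base (d+1) m n M h2 h1
    simp only [zero_add, Finset.range_one, Finset.sum_singleton, pow_zero, one_mul]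
    exact this.symm
  | (d+1), (e+1), n, m, M, _, _, ⟨g, hg, hK⟩, ⟨g', hg', hL⟩ => by
    obtain ⟨σ⟩ := schanuel g hg g' hg'
    set r : ℕ → ℕ := fun i => Nat.rec (n 1 + m 0) (fun j _ => n (j+2)) i with hr
    set s : ℕ → ℕ := fun i => Nat.rec (m 1 + n 0) (fun j _ => m (j+2)) i with hs
    have hr' : HasRes Λ d r (↥(LinearMap.ker g') × (Fin (n 0) → Λ)) :=
      hasRes_congr d r _ _ σ
        (hasRes_prod d (fun i => n (i+1)) r (m 0) rfl (fun i => rfl) _ hK)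
    have hs' : HasRes Λ e s (↥(LinearMap.ker g') × (Fin (n 0) → Λ)) :=
      hasRes_prod e (fun i => m (i+1)) s (n 0) rfl (fun i => rfl) _ hL
    have IH := main d e r s _ hr' hs'
    have e1 := sum_aux d n r (m 0)
      (by show ((n 1 + m 0 : ℕ) : ℤ) = (n 1 : ℤ) + (m 0 : ℤ); push_cast; ring) (fun i => rfl)
    have e2 := sum_aux e m s (n 0)
      (by show ((m 1 + n 0 : ℕ) : ℤ) = (m 1 : ℤ) + (n 0 : ℤ); push_cast; ring) (fun i => rfl)
    rw [e1, e2] at IH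
    linarith


/-- Transport a finite free resolution along a linear isomorphism of the resolved module. -/
def FiniteFreeResolution.congr {Λ : Type*} [CommRing Λ] {M : Type*} [AddCommGroup M]
    [Module Λ M] {M' : Type*} [AddCommGroup M'] [Module Λ M'] {d : ℕ} {n : ℕ → ℕ}
    (res : FiniteFreeResolution Λ M d n) (e : M ≃ₗ[Λ] M') :
    FiniteFreeResolution Λ M' d n where
  bounded := res.bounded
  f := res.f
  g := e.toLinearMap ∘ₗ res.g
  surj := e.surjective.comp res.surj
  exact_zero := by
    rw [LinearMap.ker_comp, LinearEquiv.ker, Submodule.comap_bot]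
    exact res.exact_zero
  exact := res.exact

lemma toHasRes : ∀ (d : ℕ) (n : ℕ → ℕ) (M : Type u) [AddCommGroup M] [Module Λ M],
    FiniteFreeResolution Λ M d n → HasRes Λ d n M
  | 0, n, M, _, _, res => by
    have h1 : n 1 = 0 := res.bounded 1 Nat.zero_lt_one
    have hz : ∀ x : Fin (n 1) → Λ, x = 0 := fun x =>
      funext fun i => absurd i.isLt (by omega)
    have hr : LinearMap.range (res.f 0) = ⊥ := by
      rw [LinearMap.range_eq_bot]
      exact LinearMap.ext fun x => by rw [hz x, map_zero]; rfl
    have hker : LinearMap.ker res.g = ⊥ := by rw [← res.exact_zero, hr]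
    exact ⟨res.g, LinearMap.ker_eq_bot.mp hker, res.surj⟩
  | (d+1), n, M, _, _, res => by
    refine ⟨res.g, res.surj, toHasRes d _ _ ?_⟩
    refine
      { bounded := fun i hi => res.bounded (i+1) (by omega)
        f := fun i => res.f (i+1)
        g := LinearMap.codRestrict (LinearMap.ker res.g) (res.f 0)
          (fun x => res.exact_zero ▸ LinearMap.mem_range_self _ x)
        surj := ?_
        exact_zero := ?_
        exact := fun i => res.exact (i+1) }
    · rintro ⟨y, hy⟩
      rw [← res.exact_zero] at hy
      obtain ⟨x, rfl⟩ := hy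
      exact ⟨x, rfl⟩
    · rw [LinearMap.ker_codRestrict]
      exact res.exact 0

/-- If a module `M` over a nontrivial commutative ring `Λ` admits two finite free
resolutions, then the alternating sums of the ranks of the two resolutions agree. -/
theorem euler_characteristic_independent_of_resolution
    (Λ : Type*) [CommRing Λ] [Nontrivial Λ]
    (M : Type*) [AddCommGroup M] [Module Λ M]
    (d e : ℕ) (n m : ℕ → ℕ)
    (res₁ : FiniteFreeResolution Λ M d n)
    (res₂ : FiniteFreeResolution Λ M e m) :
    ∑ i ∈ Finset.range (d + 1), (-1 : ℤ) ^ i * (n i : ℤ) =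
      ∑ j ∈ Finset.range (e + 1), (-1 : ℤ) ^ j * (m j : ℤ) := by
  have e0 : ((Fin (n 0) → Λ) ⧸ LinearMap.ker res₁.g) ≃ₗ[Λ] M :=
    res₁.g.quotKerEquivOfSurjective res₁.surj
  exact main d e n m _ (toHasRes d n _ (res₁.congr e0.symm)) (toHasRes e m _ (res₂.congr e0.symm))
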